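/- Let N ≥ 2, s ≥ 2 integers and j_s, j_m ∈ ℕ fixed. Then lim_{k→∞} [((sk+j_s)!)^{N-1} (k+j_m)! / ((N-1)(sk+j_s) + k + j_m)!] · [(Nk)! / (k!)^N] = 0. -/

import Mathlib

open Filter Finset Topology

/-- Factorial ratio expansion over the reals. -/
lemma fact_add_real (a c : ℕ) :
    (((a + c).factorial : ℝ)) = (a.factorial : ℝ) * ∏ i ∈ Finset.range c, ((a : ℝ) + i + 1) := by
  induction c with
  | zero => simp
  | succ c ih =>
    rw [show a + (c + 1) = (a + c) + 1 from rfl, Nat.factorial_succ, Finset.prod_range_succ]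
    push_cast
    rw [ih]; ring

/-- `(αk + c)/k → α`. -/
lemma tendsto_lin (α c : ℝ) :
    Tendsto (fun k : ℕ => (α * k + c) / k) atTop (𝓝 α) := by
  have h1 : Tendsto (fun k : ℕ => α + c * (k : ℝ)⁻¹) atTop (𝓝 (α + c * 0)) :=
    tendsto_const_nhds.add (tendsto_const_nhds.mul tendsto_inv_atTop_nhds_zero_nat)
  rw [mul_zero, add_zero] at h1
  refine h1.congr' ?_
  filter_upwards [eventually_ge_atTop 1] with k hk
  have hk0 : (k : ℝ) ≠ 0 := by
    have : (1:ℝ) ≤ (k:ℝ) := by exact_mod_cast hk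
    linarith
  field_simp

/-- One step binomial lower bound in ℕ. -/
lemma pow_succ_aux (a n : ℕ) : a ^ (n + 1) + (n + 1) * a ^ n ≤ (a + 1) ^ (n + 1) := by
  induction n with
  | zero => simp [pow_succ]
  | succ n ih =>
    have e1 : a ^ (n + 2) = a ^ (n + 1) * a := by ring
    have e2 : a ^ (n + 1) = a ^ n * a := by ring
    have step : a ^ (n + 2) + (n + 2) * a ^ (n + 1)
        ≤ (a ^ (n + 1) + (n + 1) * a ^ n) * (a + 1) := by nlinarith [Nat.zero_le (a ^ n)]
    calc a ^ (n + 2) + (n + 2) * a ^ (n + 1)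
        ≤ (a ^ (n + 1) + (n + 1) * a ^ n) * (a + 1) := step
      _ ≤ (a + 1) ^ (n + 1) * (a + 1) := Nat.mul_le_mul_right _ ih
      _ = (a + 1) ^ (n + 2) := by ring

/-- The key natural-number inequality. -/
lemma nat_key (N1 s : ℕ) (hN1 : 1 ≤ N1) (hs : 2 ≤ s) :
    (s ^ s) ^ N1 * (N1 + 1) ^ (N1 + 1) < (N1 * s + 1) ^ (N1 * s + 1) := by
  have h1 : s ^ s * (N1 + 1) ≤ (N1 * s + 1) ^ s := by
    obtain ⟨s2, rfl⟩ : ∃ t, s = t + 1 := ⟨s - 1, by omega⟩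
    have key := pow_succ_aux (N1 * (s2 + 1)) s2
    have e : (N1 * (s2 + 1)) ^ (s2 + 1) + (s2 + 1) * (N1 * (s2 + 1)) ^ s2
        = (s2 + 1) ^ (s2 + 1) * N1 ^ s2 * (N1 + 1) := by
      rw [mul_pow, mul_pow]; ring
    have hpow : 1 ≤ N1 ^ s2 := Nat.one_le_pow _ _ (by omega)
    calc (s2 + 1) ^ (s2 + 1) * (N1 + 1)
        = (s2 + 1) ^ (s2 + 1) * 1 * (N1 + 1) := by ring
      _ ≤ (s2 + 1) ^ (s2 + 1) * N1 ^ s2 * (N1 + 1) :=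
          Nat.mul_le_mul_right _ (Nat.mul_le_mul_left _ hpow)
      _ = (N1 * (s2 + 1)) ^ (s2 + 1) + (s2 + 1) * (N1 * (s2 + 1)) ^ s2 := e.symm
      _ ≤ (N1 * (s2 + 1) + 1) ^ (s2 + 1) := key
  have h2 : N1 + 1 < N1 * s + 1 := by nlinarith
  calc (s ^ s) ^ N1 * (N1 + 1) ^ (N1 + 1)
      = (s ^ s * (N1 + 1)) ^ N1 * (N1 + 1) := by rw [mul_pow]; ring
    _ ≤ ((N1 * s + 1) ^ s) ^ N1 * (N1 + 1) := Nat.mul_le_mul_right _ (Nat.pow_le_pow_left h1 _)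
    _ < ((N1 * s + 1) ^ s) ^ N1 * (N1 * s + 1) := by
        have hp : 0 < ((N1 * s + 1) ^ s) ^ N1 := by positivity
        exact (mul_lt_mul_iff_right₀ hp).mpr h2
    _ = (N1 * s + 1) ^ (N1 * s + 1) := by rw [← pow_mul, mul_comm s N1, ← pow_succ]

noncomputable def fA (N1 s js jm k : ℕ) : ℝ :=
  (((s * k + js).factorial : ℝ)) ^ N1 * ((k + jm).factorial : ℝ) * ((((N1 + 1) * k).factorial : ℝ))

noncomputable def fB (N1 s js jm k : ℕ) : ℝ :=
  ((((N1 * s + 1) * k + (N1 * js + jm)).factorial : ℝ)) * ((k.factorial : ℝ)) ^ (N1 + 1)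

noncomputable def gA (N1 s js jm k : ℕ) : ℝ :=
  (∏ i ∈ Finset.range s, ((s : ℝ) * k + ((js : ℝ) + i + 1))) ^ N1 *
    (1 * (k : ℝ) + ((jm : ℝ) + 1)) *
    ∏ i ∈ Finset.range (N1 + 1), (((N1 : ℝ) + 1) * k + ((i : ℝ) + 1))

noncomputable def gB (N1 s js jm k : ℕ) : ℝ :=
  (∏ i ∈ Finset.range (N1 * s + 1),
      (((N1 : ℝ) * s + 1) * k + (((N1 : ℝ) * js + jm) + i + 1))) *
    (1 * (k : ℝ) + 1) ^ (N1 + 1)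

lemma fA_pos (N1 s js jm k : ℕ) : 0 < fA N1 s js jm k := by
  unfold fA; positivity

lemma fB_pos (N1 s js jm k : ℕ) : 0 < fB N1 s js jm k := by
  unfold fB; positivity

lemma gA_pos (N1 s js jm k : ℕ) : 0 < gA N1 s js jm k := by
  unfold gA; positivity

lemma gB_pos (N1 s js jm k : ℕ) : 0 < gB N1 s js jm k := by
  unfold gB; positivity

lemma fA_succ (N1 s js jm k : ℕ) :
    fA N1 s js jm (k + 1) = fA N1 s js jm k * gA N1 s js jm k := by
  unfold fA gA
  have e1 : s * (k + 1) + js = (s * k + js) + s := by ring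
  have e2 : (k + 1) + jm = (k + jm) + 1 := by ring
  have e3 : (N1 + 1) * (k + 1) = ((N1 + 1) * k) + (N1 + 1) := by ring
  rw [e1, e2, e3, fact_add_real (s * k + js) s, fact_add_real (k + jm) 1,
    fact_add_real ((N1 + 1) * k) (N1 + 1), Finset.prod_range_one]
  have p1 : (∏ i ∈ Finset.range s, (((s * k + js : ℕ) : ℝ) + i + 1))
      = ∏ i ∈ Finset.range s, ((s : ℝ) * k + ((js : ℝ) + i + 1)) := by
    refine Finset.prod_congr rfl fun i _ => ?_
    push_cast; ring
  have p3 : (∏ i ∈ Finset.range (N1 + 1), ((((N1 + 1) * k : ℕ) : ℝ) + i + 1))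
      = ∏ i ∈ Finset.range (N1 + 1), (((N1 : ℝ) + 1) * k + ((i : ℝ) + 1)) := by
    refine Finset.prod_congr rfl fun i _ => ?_
    push_cast; ring
  rw [p1, p3]
  push_cast
  ring

lemma fB_succ (N1 s js jm k : ℕ) :
    fB N1 s js jm (k + 1) = fB N1 s js jm k * gB N1 s js jm k := by
  unfold fB gB
  have e4 : (N1 * s + 1) * (k + 1) + (N1 * js + jm)
      = ((N1 * s + 1) * k + (N1 * js + jm)) + (N1 * s + 1) := by ring
  have pf : (((k + 1).factorial : ℝ)) ^ (N1 + 1)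
      = ((k.factorial : ℝ)) ^ (N1 + 1) * ((1 : ℝ) * k + 1) ^ (N1 + 1) := by
    rw [Nat.factorial_succ]
    push_cast
    rw [← mul_pow]
    ring_nf
  rw [e4, fact_add_real ((N1 * s + 1) * k + (N1 * js + jm)) (N1 * s + 1), pf]
  have p1 : (∏ i ∈ Finset.range (N1 * s + 1),
        ((((N1 * s + 1) * k + (N1 * js + jm) : ℕ) : ℝ) + i + 1))
      = ∏ i ∈ Finset.range (N1 * s + 1),
        (((N1 : ℝ) * s + 1) * k + (((N1 : ℝ) * js + jm) + i + 1)) := by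
    refine Finset.prod_congr rfl fun i _ => ?_
    push_cast; ring
  rw [p1]
  ring

/-- For integers `N ≥ 2`, `s ≥ 2` and fixed `j_s, j_m ∈ ℕ`,
`lim_{k→∞} ((sk+j_s)!)^{N-1} (k+j_m)! / ((N-1)(sk+j_s)+k+j_m)! · (Nk)!/(k!)^N = 0`. -/
theorem stirling_limit_zero' (N s js jm : ℕ) (hN : 2 ≤ N) (hs : 2 ≤ s) :
    Tendsto (fun k : ℕ =>
        (((s * k + js).factorial : ℝ)) ^ (N - 1) * ((k + jm).factorial : ℝ) /
            (((N - 1) * (s * k + js) + k + jm).factorial : ℝ) *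
          (((N * k).factorial : ℝ) / ((k.factorial : ℝ)) ^ N))
      atTop (nhds 0) := by
  obtain ⟨N1, rfl⟩ : ∃ n, N = n + 1 := ⟨N - 1, by omega⟩
  have hN1 : 1 ≤ N1 := by omega
  simp only [Nat.add_sub_cancel]
  -- the statement function written as a single quotient
  have hFeq : ∀ k : ℕ,
      (((s * k + js).factorial : ℝ)) ^ N1 * ((k + jm).factorial : ℝ) /
          ((N1 * (s * k + js) + k + jm).factorial : ℝ) *
        ((((N1 + 1) * k).factorial : ℝ) / ((k.factorial : ℝ)) ^ (N1 + 1))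
      = fA N1 s js jm k / fB N1 s js jm k := by
    intro k
    have harg : N1 * (s * k + js) + k + jm = (N1 * s + 1) * k + (N1 * js + jm) := by ring
    rw [harg, div_mul_div_comm]
    rfl
  simp only [hFeq]
  -- limits of the one–step ratio
  have hA : Tendsto (fun k : ℕ => gA N1 s js jm k / (k : ℝ) ^ (s * N1 + 1 + (N1 + 1)))
      atTop (𝓝 (((s : ℝ) ^ s) ^ N1 * ((N1 : ℝ) + 1) ^ (N1 + 1))) := by
    have t1 : Tendsto (fun k : ℕ => ∏ i ∈ Finset.range s, (((s : ℝ) * k + ((js : ℝ) + i + 1)) / k))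
        atTop (𝓝 ((s : ℝ) ^ s)) := by
      have := tendsto_finset_prod
        (f := fun (i : ℕ) (k : ℕ) => ((s : ℝ) * k + ((js : ℝ) + i + 1)) / k)
        (a := fun _ => (s : ℝ)) (Finset.range s) (fun i _ => tendsto_lin _ _)
      simpa using this
    have t3 : Tendsto (fun k : ℕ =>
        ∏ i ∈ Finset.range (N1 + 1), ((((N1 : ℝ) + 1) * k + ((i : ℝ) + 1)) / k))
        atTop (𝓝 (((N1 : ℝ) + 1) ^ (N1 + 1))) := by
      have := tendsto_finset_prod
        (f := fun (i : ℕ) (k : ℕ) => (((N1 : ℝ) + 1) * k + ((i : ℝ) + 1)) / k)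
        (a := fun _ => ((N1 : ℝ) + 1)) (Finset.range (N1 + 1)) (fun i _ => tendsto_lin _ _)
      simpa using this
    have t2 : Tendsto (fun k : ℕ => (1 * (k : ℝ) + ((jm : ℝ) + 1)) / k) atTop (𝓝 1) :=
      tendsto_lin 1 _
    have hh := ((t1.pow N1).mul t2).mul t3
    rw [mul_one] at hh
    refine hh.congr' ?_
    filter_upwards [eventually_ge_atTop 1] with k hk
    have hk0 : (k : ℝ) ≠ 0 := Nat.cast_ne_zero.mpr (by omega)
    unfold gA
    rw [Finset.prod_div_distrib, Finset.prod_div_distrib, Finset.prod_const, Finset.card_range,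
      Finset.prod_const, Finset.card_range, div_pow]
    rw [div_mul_div_comm, div_mul_div_comm]
    congr 1
    rw [← pow_mul, pow_add (k : ℝ) (s * N1 + 1) (N1 + 1), pow_add (k : ℝ) (s * N1) 1, pow_one]
  have hB : Tendsto (fun k : ℕ => gB N1 s js jm k / (k : ℝ) ^ (s * N1 + 1 + (N1 + 1)))
      atTop (𝓝 (((N1 : ℝ) * s + 1) ^ (N1 * s + 1))) := by
    have t4 : Tendsto (fun k : ℕ => ∏ i ∈ Finset.range (N1 * s + 1),
        ((((N1 : ℝ) * s + 1) * k + (((N1 : ℝ) * js + jm) + i + 1)) / k))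
        atTop (𝓝 (((N1 : ℝ) * s + 1) ^ (N1 * s + 1))) := by
      have := tendsto_finset_prod
        (f := fun (i : ℕ) (k : ℕ) => (((N1 : ℝ) * s + 1) * k + (((N1 : ℝ) * js + jm) + i + 1)) / k)
        (a := fun _ => ((N1 : ℝ) * s + 1)) (Finset.range (N1 * s + 1))
        (fun i _ => tendsto_lin _ _)
      simpa using this
    have t5 : Tendsto (fun k : ℕ => ((1 * (k : ℝ) + 1) / k) ^ (N1 + 1)) atTop (𝓝 1) := by
      have := (tendsto_lin 1 1).pow (N1 + 1)
      simpa using this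
    have hh := t4.mul t5
    rw [mul_one] at hh
    refine hh.congr' ?_
    filter_upwards [eventually_ge_atTop 1] with k hk
    have hk0 : (k : ℝ) ≠ 0 := Nat.cast_ne_zero.mpr (by omega)
    unfold gB
    rw [Finset.prod_div_distrib, Finset.prod_const, Finset.card_range, div_pow]
    rw [div_mul_div_comm]
    congr 1
    rw [pow_add (k : ℝ) (s * N1 + 1) (N1 + 1), show s * N1 = N1 * s from Nat.mul_comm s N1]
  have hLBpos : (0 : ℝ) < ((N1 : ℝ) * s + 1) ^ (N1 * s + 1) := by positivity
  have hg : Tendsto (fun k : ℕ => gA N1 s js jm k / gB N1 s js jm k) atTop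
      (𝓝 ((((s : ℝ) ^ s) ^ N1 * ((N1 : ℝ) + 1) ^ (N1 + 1)) /
        (((N1 : ℝ) * s + 1) ^ (N1 * s + 1)))) := by
    have := hA.div hB hLBpos.ne'
    refine this.congr' ?_
    filter_upwards [eventually_ge_atTop 1] with k hk
    have hk0 : (k : ℝ) ≠ 0 := Nat.cast_ne_zero.mpr (by omega)
    have hkM : (k : ℝ) ^ (s * N1 + 1 + (N1 + 1)) ≠ 0 := pow_ne_zero _ hk0
    have hgB := (gB_pos N1 s js jm k).ne'
    rw [Pi.div_apply]
    field_simp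
  have hlt : (((s : ℝ) ^ s) ^ N1 * ((N1 : ℝ) + 1) ^ (N1 + 1)) /
      (((N1 : ℝ) * s + 1) ^ (N1 * s + 1)) < 1 := by
    rw [div_lt_one hLBpos]
    exact_mod_cast nat_key N1 s hN1 hs
  refine Summable.tendsto_atTop_zero ?_
  refine summable_of_ratio_test_tendsto_lt_one hlt ?_ ?_
  · exact Eventually.of_forall fun k =>
      (div_pos (fA_pos N1 s js jm k) (fB_pos N1 s js jm k)).ne'
  · refine hg.congr fun k => ?_
    have ha := (fA_pos N1 s js jm k).ne'
    have hb := (fB_pos N1 s js jm k).ne'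
    have hgb := (gB_pos N1 s js jm k).ne'
    rw [Real.norm_eq_abs, Real.norm_eq_abs,
      abs_of_pos (div_pos (fA_pos N1 s js jm (k + 1)) (fB_pos N1 s js jm (k + 1))),
      abs_of_pos (div_pos (fA_pos N1 s js jm k) (fB_pos N1 s js jm k)),
      fA_succ, fB_succ]
    field_simp
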